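/- Let n ≥ 3 and let F be the Fibonacci function on the set 𝒜 of alternating geodesics of the Cayley tree Δ of Γₙ, relative to the root v₀. For every integer m ≥ 2, the number of γ ∈ 𝒜 with F(γ) = m is at most n·m^{n−2}. -/

import Mathlib

open scoped BigOperators

noncomputable section

namespace MarkoffHurwitz

/-- The Markoff–Hurwitz polynomial `H(x) = x₁² + ⋯ + xₙ² − x₁⋯xₙ`. -/
def MH (n : ℕ) (x : Fin n → ℂ) : ℂ := (∑ i, x i ^ 2) - ∏ i, x i

/-- The involution `bᵢ` replacing `xᵢ` by `(∏_{j≠i} x_j) − xᵢ`. -/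
def bmap (n : ℕ) (i : Fin n) (x : Fin n → ℂ) : Fin n → ℂ :=
  Function.update x i ((∏ j ∈ Finset.univ.erase i, x j) - x i)

lemma bmap_apply_ne (n : ℕ) (i : Fin n) (x : Fin n → ℂ) {j : Fin n} (h : j ≠ i) :
    bmap n i x j = x j := Function.update_of_ne h _ _

lemma bmap_apply_same (n : ℕ) (i : Fin n) (x : Fin n → ℂ) :
    bmap n i x i = (∏ j ∈ Finset.univ.erase i, x j) - x i := Function.update_self _ _ _

lemma prod_erase_bmap (n : ℕ) (i : Fin n) (x : Fin n → ℂ) :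
    ∏ j ∈ Finset.univ.erase i, bmap n i x j = ∏ j ∈ Finset.univ.erase i, x j :=
  Finset.prod_congr rfl fun j hj => bmap_apply_ne n i x (Finset.ne_of_mem_erase hj)

lemma bmap_involutive (n : ℕ) (i : Fin n) : Function.Involutive (bmap n i) := by
  intro x; funext j
  rcases eq_or_ne j i with rfl | h
  · rw [bmap_apply_same, prod_erase_bmap, bmap_apply_same]; ring
  · rw [bmap_apply_ne n i _ h, bmap_apply_ne n i x h]

/-- The relators `bᵢ²` of the Coxeter presentation. -/
def MHrels (n : ℕ) : Set (FreeGroup (Fin n)) :=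
  Set.range fun i : Fin n => FreeGroup.of i * FreeGroup.of i

/-- The group `Γₙ = ⟨b₁,…,bₙ ∣ bᵢ² = 1⟩`, free product of `n` copies of `ℤ/2`. -/
abbrev Gam (n : ℕ) := PresentedGroup (MHrels n)

/-- The generator `bᵢ` as an element of `Γₙ`. -/
def gen {n : ℕ} (i : Fin n) : Gam n := PresentedGroup.of i

lemma gen_mul_self {n : ℕ} (i : Fin n) : gen i * gen i = 1 := by
  have h : PresentedGroup.mk (MHrels n) (FreeGroup.of i * FreeGroup.of i) = 1 := by
    have : (FreeGroup.of i * FreeGroup.of i) ∈ Subgroup.normalClosure (MHrels n) :=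
      Subgroup.subset_normalClosure ⟨i, rfl⟩
    exact (QuotientGroup.eq_one_iff _).2 this
  simpa [gen, PresentedGroup.of, map_mul] using h

lemma gen_inv {n : ℕ} (i : Fin n) : (gen i)⁻¹ = gen i :=
  inv_eq_of_mul_eq_one_right (gen_mul_self i)

/-- `bᵢ` as a permutation of `ℂⁿ`. -/
def bperm (n : ℕ) (i : Fin n) : Equiv.Perm (Fin n → ℂ) := (bmap_involutive n i).toPerm

/-- The action of `Γₙ` on `ℂⁿ` by the involutions `bᵢ`. -/
def act (n : ℕ) : Gam n →* Equiv.Perm (Fin n → ℂ) :=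
  PresentedGroup.toGroup (f := fun i => bperm n i) (by
    rintro r ⟨i, rfl⟩
    rw [map_mul, FreeGroup.lift_apply_of]
    refine Equiv.ext fun x => ?_
    simpa [bperm, Equiv.Perm.mul_apply] using bmap_involutive n i x)

lemma act_gen (n : ℕ) (i : Fin n) : act n (gen i) = bperm n i :=
  PresentedGroup.toGroup.of _

/-- The subgroup `⟨bᵢ, b_j⟩` associated to an unordered pair `{i,j}`. -/
def pairSub {n : ℕ} : Sym2 (Fin n) → Subgroup (Gam n) :=
  Sym2.lift ⟨fun i j => Subgroup.closure {gen i, gen j}, fun i j => by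
    show Subgroup.closure {gen i, gen j} = Subgroup.closure {gen j, gen i}
    rw [Set.pair_comm]⟩

lemma pairSub_mk {n : ℕ} (i j : Fin n) :
    pairSub s(i, j) = Subgroup.closure {gen i, gen j} := rfl

/-- An alternating geodesic in the Cayley tree of `Γₙ`: an unordered pair `{i,j}`
of distinct colors together with a coset `g⟨bᵢ,b_j⟩`. -/
structure AltGeo (n : ℕ) where
  pair : Sym2 (Fin n)
  nd : ¬ pair.IsDiag
  coset : Gam n ⧸ pairSub pair

/-- Coordinates outside of a pair `{i,j}`. -/
def offPair {n : ℕ} (s : Sym2 (Fin n)) : Finset (Fin n) :=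
  Finset.univ.filter fun k => ¬ k ∈ s

/-- Key invariance: the coordinates off the pair do not change when moving along the coset. -/
lemma coords_eq {n : ℕ} (a : Fin n → ℂ) (s : Sym2 (Fin n)) {t : Gam n}
    (ht : t ∈ pairSub s) (g : Gam n) {k : Fin n} (hk : ¬ k ∈ s) :
    act n (g * t)⁻¹ a k = act n g⁻¹ a k := by
  induction s using Sym2.ind with
  | _ i j =>
    rw [pairSub_mk] at ht
    induction ht using Subgroup.closure_induction generalizing g with
    | mem x hx =>
      have key : ∀ m : Fin n, m ∈ (s(i, j) : Sym2 (Fin n)) → ∀ g : Gam n,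
          act n (g * gen m)⁻¹ a k = act n g⁻¹ a k := by
        intro m hm g
        rw [mul_inv_rev, gen_inv, map_mul, Equiv.Perm.mul_apply, act_gen]
        have hkm : k ≠ m := fun h => hk (h ▸ hm)
        exact bmap_apply_ne n m _ hkm
      rcases hx with rfl | rfl
      · exact key i (Sym2.mem_mk_left i j) g
      · exact key j (Sym2.mem_mk_right i j) g
    | one => rw [mul_one]
    | mul x y hx hy ihx ihy => rw [← mul_assoc]; rw [ihy, ihx]
    | inv x hx ih =>
      have := ih (g := g * x⁻¹)
      rw [mul_assoc, inv_mul_cancel, mul_one] at this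
      exact this.symm

/-- Representative version of the extended Hurwitz map. -/
def phiRep (n : ℕ) (a : Fin n → ℂ) (s : Sym2 (Fin n)) (g : Gam n) : ℂ :=
  ∏ k ∈ offPair s, act n g⁻¹ a k

/-- Representative version of the square sum weight. -/
def sigRep (n : ℕ) (a : Fin n → ℂ) (s : Sym2 (Fin n)) (g : Gam n) : ℂ :=
  ∑ k ∈ offPair s, (act n g⁻¹ a k) ^ 2

/-- The extended Hurwitz map `φ_a : 𝒜 → ℂ`, `φ(γ) = ∏_{k∉{i,j}} x_k`. -/
def phiA (n : ℕ) (a : Fin n → ℂ) (γ : AltGeo n) : ℂ :=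
  Quotient.liftOn' γ.coset (phiRep n a γ.pair) (by
    intro g h hgh
    have hmem : g⁻¹ * h ∈ pairSub γ.pair := QuotientGroup.leftRel_apply.mp hgh
    have : h = g * (g⁻¹ * h) := by group
    rw [this]
    unfold phiRep
    exact (Finset.prod_congr rfl fun k hk =>
      (coords_eq a γ.pair hmem g (Finset.mem_filter.mp hk).2)).symm)

/-- The square sum weight `σ_a : 𝒜 → ℂ`, `σ(γ) = ∑_{k∉{i,j}} x_k²`. -/
def sigA (n : ℕ) (a : Fin n → ℂ) (γ : AltGeo n) : ℂ :=
  Quotient.liftOn' γ.coset (sigRep n a γ.pair) (by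
    intro g h hgh
    have hmem : g⁻¹ * h ∈ pairSub γ.pair := QuotientGroup.leftRel_apply.mp hgh
    have : h = g * (g⁻¹ * h) := by group
    rw [this]
    unfold sigRep
    exact (Finset.sum_congr rfl fun k hk => by
      rw [coords_eq a γ.pair hmem g (Finset.mem_filter.mp hk).2]).symm)

/-- The set `𝒜_φ(K)` of alternating geodesics with `|φ(γ)| ≤ K`. -/
def AK (n : ℕ) (a : Fin n → ℂ) (K : ℝ) : Set (AltGeo n) :=
  {γ | ‖phiA n a γ‖ ≤ K}

/-- The Bowditch domain `𝒟 ⊆ ℂⁿ`. -/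
def BD (n : ℕ) : Set (Fin n → ℂ) :=
  {a | (∀ γ : AltGeo n, phiA n a γ ∉ (fun r : ℝ => (r : ℂ)) '' Set.Icc (-2 : ℝ) 2) ∧
    ∃ K : ℝ, 2 < K ∧ (AK n a K).Finite}



/-- Word length of `g ∈ Γₙ` with respect to the generators `b₁,…,bₙ`. -/
def glen (n : ℕ) (g : Gam n) : ℕ :=
  sInf {m | ∃ l : List (Fin n), l.length = m ∧ g = (l.map gen).prod}

/-- The alternating geodesic `[g;{i,k}]` through the vertex `g` with colors `{i,k}`. -/
def mkGeo {n : ℕ} (i k : Fin n) (h : i ≠ k) (g : Gam n) : AltGeo n :=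
  ⟨s(i, k), by rwa [Sym2.mk_isDiag_iff], QuotientGroup.mk g⟩

/-- `F : 𝒜 → ℕ` is the Fibonacci function relative to the root `v₀ = 1`:
`F(γ) = 1` if the root lies on `γ`, and otherwise `F(γ) = F([v*;{i,k}]) + F([v*;{j,k}])`,
where `v*` is the vertex of `γ` closest to the root and `k` is the label of the first
edge of the geodesic from `v*` to the root. -/
def IsFib (n : ℕ) (F : AltGeo n → ℕ) : Prop :=
  (∀ γ : AltGeo n, γ.coset = QuotientGroup.mk 1 → F γ = 1) ∧
  (∀ γ : AltGeo n, γ.coset ≠ QuotientGroup.mk 1 →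
    ∀ g : Gam n, QuotientGroup.mk g = γ.coset →
      (∀ h : Gam n, QuotientGroup.mk h = γ.coset → glen n g ≤ glen n h) →
      ∀ i j k : Fin n, γ.pair = s(i, j) → ∀ (hki : k ≠ i) (hkj : k ≠ j),
        glen n (g * gen k) < glen n g →
        F γ = F (mkGeo i k hki.symm g) + F (mkGeo j k hkj.symm g))

/-- `log⁺ t = max (0, log t)`. -/
def logp (t : ℝ) : ℝ := max 0 (Real.log t)

/-- The subgroup `⟨b_j : j ≠ i⟩`. -/
def hatSub (n : ℕ) (i : Fin n) : Subgroup (Gam n) :=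
  Subgroup.closure {g | ∃ j : Fin n, j ≠ i ∧ g = gen j}

lemma coord_eq (n : ℕ) (a : Fin n → ℂ) (i : Fin n) {t : Gam n}
    (ht : t ∈ hatSub n i) (g : Gam n) :
    act n (g * t)⁻¹ a i = act n g⁻¹ a i := by
  induction ht using Subgroup.closure_induction generalizing g with
  | mem x hx =>
    obtain ⟨j, hji, rfl⟩ := hx
    rw [mul_inv_rev, gen_inv, map_mul, Equiv.Perm.mul_apply, act_gen]
    exact bmap_apply_ne n j _ hji.symm
  | one => rw [mul_one]
  | mul x y hx hy ihx ihy => rw [← mul_assoc, ihy, ihx]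
  | inv x hx ih =>
    have := ih (g := g * x⁻¹)
    rw [mul_assoc, inv_mul_cancel, mul_one] at this
    exact this.symm

/-- For a coset `X = g⟨b_j : j ≠ i⟩ ∈ 𝒳ᵢ`, the (constant) `i`-th coordinate `φ(X)`. -/
def coordX (n : ℕ) (a : Fin n → ℂ) (i : Fin n) (X : Gam n ⧸ hatSub n i) : ℂ :=
  Quotient.liftOn' X (fun g => act n g⁻¹ a i) (by
    intro g h hgh
    have hmem : g⁻¹ * h ∈ hatSub n i := QuotientGroup.leftRel_apply.mp hgh
    have hh : h = g * (g⁻¹ * h) := by group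
    show act n g⁻¹ a i = act n h⁻¹ a i
    rw [hh, coord_eq n a i hmem g])

/-- `a ∈ ℂⁿ` is dihedral if some point of its `Γₙ`-orbit has two vanishing coordinates. -/
def Dihedral (n : ℕ) (a : Fin n → ℂ) : Prop :=
  ∃ (g : Gam n) (i j : Fin n), i ≠ j ∧ act n g a i = 0 ∧ act n g a j = 0

/-- The alternating geodesic `γ` contains the edge of color `i` incident to the vertex `g`. -/
def containsEdge {n : ℕ} (γ : AltGeo n) (g : Gam n) (i : Fin n) : Prop :=
  i ∈ γ.pair ∧ (QuotientGroup.mk g : Gam n ⧸ pairSub γ.pair) = γ.coset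

/-- Two alternating geodesics share an edge of the tree. -/
def ShareEdge {n : ℕ} (α β : AltGeo n) : Prop :=
  ∃ (g : Gam n) (i : Fin n), containsEdge α g i ∧ containsEdge β g i

/-- A set of alternating geodesics is edge-connected. -/
def EdgeConnected {n : ℕ} (P : Set (AltGeo n)) : Prop :=
  ∀ α ∈ P, ∀ β ∈ P, ∃ (m : ℕ) (c : ℕ → AltGeo n),
    c 0 = α ∧ c m = β ∧ (∀ t ≤ m, c t ∈ P) ∧ ∀ t < m, ShareEdge (c t) (c (t + 1))

/-- `h(z) = 1 − √(1 − 4/z²)`, with the principal square root (positive real part). -/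
def hfun (z : ℂ) : ℂ := 1 - (1 - 4 / z ^ 2) ^ ((1 : ℂ) / 2)

/-! ### Phase A: reduced words and normal forms -/

section Words

variable {n : ℕ}

/-- Reduced words: lists with no two adjacent equal letters. -/
abbrev RW (n : ℕ) := {l : List (Fin n) // l.IsChain (· ≠ ·)}

lemma chain'_cons_of_head? {i : Fin n} {l : List (Fin n)} (hl : l.IsChain (· ≠ ·))
    (h : l.head? ≠ some i) : (i :: l).IsChain (· ≠ ·) := by
  rcases l with _ | ⟨a, t⟩
  · simp
  · refine List.isChain_cons_cons.2 ⟨?_, hl⟩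
    intro hia
    exact h (by rw [hia]; rfl)

lemma head?_ne_of_chain' {i : Fin n} {t : List (Fin n)}
    (hl : (i :: t).IsChain (· ≠ ·)) : t.head? ≠ some i := by
  rcases t with _ | ⟨b, t'⟩
  · simp
  · simp only [List.head?_cons, Option.some.injEq]
    intro hbi
    injection hbi with hbi
    exact (List.isChain_cons_cons.1 hl).1 hbi.symm

/-- Toggle: left multiplication by the generator `i` on reduced words. -/
def tog (i : Fin n) (x : RW n) : RW n :=
  if h : x.val.head? = some i then
    ⟨x.val.tail, x.prop.tail⟩
  else
    ⟨i :: x.val, chain'_cons_of_head? x.prop h⟩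

lemma tog_val_of_head (i : Fin n) (x : RW n) (h : x.val.head? = some i) :
    (tog i x).val = x.val.tail := by simp [tog, h]

lemma tog_val_of_ne (i : Fin n) (x : RW n) (h : x.val.head? ≠ some i) :
    (tog i x).val = i :: x.val := by simp [tog, h]

lemma tog_involutive (i : Fin n) : Function.Involutive (tog i) := by
  intro x
  by_cases h : x.val.head? = some i
  · rcases hx : x.val with _ | ⟨a, t⟩
    · rw [hx] at h; simp at h
    · rw [hx] at h; simp only [List.head?_cons, Option.some.injEq] at h
      subst h
      have h1 : (tog a x).val = t := by
        rw [tog_val_of_head a x (by rw [hx]; rfl), hx]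
        rfl
      have h2 : (tog a x).val.head? ≠ some a := by
        rw [h1]; exact head?_ne_of_chain' (hx ▸ x.prop)
      apply Subtype.ext
      rw [tog_val_of_ne a _ h2, h1, hx]
  · have h1 : (tog i x).val = i :: x.val := tog_val_of_ne i x h
    have h2 : (tog i x).val.head? = some i := by rw [h1]; rfl
    apply Subtype.ext
    rw [tog_val_of_head i _ h2, h1]
    rfl

/-- The toggle as a permutation. -/
def togPerm (i : Fin n) : Equiv.Perm (RW n) := (tog_involutive i).toPerm

/-- The action of `Γₙ` on reduced words. -/
def actW (n : ℕ) : Gam n →* Equiv.Perm (RW n) :=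
  PresentedGroup.toGroup (f := fun i => togPerm i) (by
    rintro r ⟨i, rfl⟩
    rw [map_mul, FreeGroup.lift_apply_of]
    refine Equiv.ext fun x => ?_
    simpa [togPerm, Equiv.Perm.mul_apply] using tog_involutive i x)

lemma actW_gen (i : Fin n) : actW n (gen i) = togPerm i :=
  PresentedGroup.toGroup.of _

lemma actW_gen_apply (i : Fin n) (x : RW n) : (actW n (gen i)) x = tog i x := by
  rw [actW_gen]; rfl

/-- The word map. -/
def wrd (l : List (Fin n)) : Gam n := (l.map gen).prod

@[simp] lemma wrd_nil : wrd ([] : List (Fin n)) = 1 := rfl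

@[simp] lemma wrd_cons (i : Fin n) (l : List (Fin n)) :
    wrd (i :: l) = gen i * wrd l := by simp [wrd]

lemma wrd_append (l₁ l₂ : List (Fin n)) : wrd (l₁ ++ l₂) = wrd l₁ * wrd l₂ := by
  simp [wrd]

lemma wrd_reverse (l : List (Fin n)) : wrd l.reverse = (wrd l)⁻¹ := by
  induction l with
  | nil => simp
  | cons i t ih =>
      rw [List.reverse_cons, wrd_append, ih, wrd_cons]
      simp [wrd, gen_inv]

lemma exists_word (g : Gam n) : ∃ l : List (Fin n), g = wrd l := by
  obtain ⟨x, rfl⟩ := QuotientGroup.mk'_surjective (Subgroup.normalClosure (MHrels n)) g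
  induction x using FreeGroup.induction_on with
  | C1 => exact ⟨[], by simp; rfl⟩
  | of i => exact ⟨[i], by simp [wrd, gen, PresentedGroup.of]; rfl⟩
  | inv_of i h =>
      refine ⟨[i], ?_⟩
      show ((QuotientGroup.mk' (Subgroup.normalClosure (MHrels n))) (FreeGroup.of i))⁻¹ = wrd [i]
      have hof : ((QuotientGroup.mk' (Subgroup.normalClosure (MHrels n))) (FreeGroup.of i) : Gam n)
          = gen i := rfl
      rw [hof]; refine (gen_inv i).trans ?_
      simp [wrd]
  | mul a b ha hb =>
      obtain ⟨la, hla⟩ := ha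
      obtain ⟨lb, hlb⟩ := hb
      exact ⟨la ++ lb, by rw [wrd_append, map_mul, hla, hlb]; rfl⟩

lemma wrd_tog (i : Fin n) (x : RW n) : wrd (tog i x).val = gen i * wrd x.val := by
  by_cases h : x.val.head? = some i
  · rcases hx : x.val with _ | ⟨a, t⟩
    · rw [hx] at h; simp at h
    · rw [hx] at h; simp only [List.head?_cons, Option.some.injEq] at h
      subst h
      rw [tog_val_of_head a x (by rw [hx]; rfl), hx]
      show wrd t = gen a * wrd (a :: t)
      rw [wrd_cons, ← mul_assoc, gen_mul_self, one_mul]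
  · rw [tog_val_of_ne i x h, wrd_cons]

lemma wrd_actW (g : Gam n) (x : RW n) : wrd ((actW n g) x).val = g * wrd x.val := by
  obtain ⟨l, rfl⟩ := exists_word g
  induction l with
  | nil => simp [map_one]
  | cons i t ih =>
      rw [wrd_cons, map_mul, Equiv.Perm.mul_apply, actW_gen_apply, wrd_tog, ih, mul_assoc]

/-- The empty reduced word. -/
def rwNil : RW n := ⟨[], List.isChain_nil⟩

/-- Reversed normal form of `g` : the unique reduced word whose `wrd` is `g⁻¹`. -/
def rho (g : Gam n) : List (Fin n) := ((actW n g⁻¹) rwNil).val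

lemma rho_chain' (g : Gam n) : (rho g).IsChain (· ≠ ·) := ((actW n g⁻¹) rwNil).prop

lemma wrd_rho (g : Gam n) : wrd (rho g) = g⁻¹ := by
  unfold rho
  rw [wrd_actW]; simp [rwNil]

@[simp] lemma rho_one : rho (1 : Gam n) = [] := by
  unfold rho; simp [rwNil, map_one]

lemma rho_mul_gen (g : Gam n) (k : Fin n) :
    rho (g * gen k) = (tog k ⟨rho g, rho_chain' g⟩).val := by
  unfold rho
  rw [mul_inv_rev, gen_inv, map_mul, Equiv.Perm.mul_apply, actW_gen_apply]

lemma actW_wrd_of_chain (l : List (Fin n)) (hl : l.IsChain (· ≠ ·)) :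
    (actW n (wrd l)) rwNil = ⟨l, hl⟩ := by
  induction l with
  | nil => simp [map_one, rwNil]
  | cons i t ih =>
      rw [wrd_cons, map_mul, Equiv.Perm.mul_apply, actW_gen_apply, ih hl.tail]
      apply Subtype.ext
      rw [tog_val_of_ne i ⟨t, hl.tail⟩ (head?_ne_of_chain' hl)]

lemma rho_wrd_inv (l : List (Fin n)) (hl : l.IsChain (· ≠ ·)) :
    rho ((wrd l)⁻¹) = l := by
  unfold rho
  rw [inv_inv, actW_wrd_of_chain l hl]

lemma eq_of_rho_eq {g h : Gam n} (hr : rho g = rho h) : g = h := by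
  have h1 := wrd_rho (n := n) g
  rw [hr, wrd_rho] at h1
  exact inv_injective h1.symm

lemma length_actW_le (l : List (Fin n)) (x : RW n) :
    ((actW n (wrd l)) x).val.length ≤ l.length + x.val.length := by
  induction l with
  | nil => simp [map_one]
  | cons i t ih =>
      rw [wrd_cons, map_mul, Equiv.Perm.mul_apply, actW_gen_apply]
      set y := (actW n (wrd t)) x with hy
      by_cases h : y.val.head? = some i
      · rw [tog_val_of_head i y h]
        have : y.val.tail.length ≤ y.val.length := by
          rw [List.length_tail]; omega
        simp only [List.length_cons]
        omega
      · rw [tog_val_of_ne i y h]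
        simp only [List.length_cons]
        omega

lemma glen_eq (g : Gam n) : glen n g = (rho g).length := by
  have hmem : (rho g).length ∈ {m | ∃ l : List (Fin n), l.length = m ∧ g = (l.map gen).prod} := by
    refine ⟨(rho g).reverse, by simp, ?_⟩
    show g = wrd (rho g).reverse
    rw [wrd_reverse, wrd_rho, inv_inv]
  refine le_antisymm (Nat.sInf_le hmem) (le_csInf ⟨_, hmem⟩ ?_)
  rintro b ⟨l, rfl, hg⟩
  have hg' : g = wrd l := hg
  have h2 : rho g = ((actW n (wrd l.reverse)) rwNil).val := by
    unfold rho
    rw [wrd_reverse, ← hg']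
  rw [h2]
  have h3 := length_actW_le (n := n) l.reverse rwNil
  simpa [rwNil] using h3

end Words
/-! ### Phase B: cosets of pair subgroups and stripped words -/

section Strip

variable {n : ℕ}

open scoped Classical

/-- Strip the longest prefix of letters belonging to the pair `p`. -/
noncomputable def strip (p : Sym2 (Fin n)) (l : List (Fin n)) : List (Fin n) :=
  l.dropWhile (fun x => decide (x ∈ p))

lemma strip_nil (p : Sym2 (Fin n)) : strip p [] = [] := rfl

lemma strip_cons_mem (p : Sym2 (Fin n)) {i : Fin n} (hi : i ∈ p) (l : List (Fin n)) :
    strip p (i :: l) = strip p l := by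
  simp [strip, List.dropWhile, hi]

lemma strip_cons_not_mem (p : Sym2 (Fin n)) {i : Fin n} (hi : ¬ i ∈ p) (l : List (Fin n)) :
    strip p (i :: l) = i :: l := by
  simp [strip, List.dropWhile, hi]

lemma strip_eq_self (p : Sym2 (Fin n)) {l : List (Fin n)}
    (h : ∀ i ∈ l.head?, ¬ i ∈ p) : strip p l = l := by
  rcases l with _ | ⟨a, t⟩
  · rfl
  · exact strip_cons_not_mem p (h a rfl) t

lemma strip_idem (p : Sym2 (Fin n)) (l : List (Fin n)) :
    strip p (strip p l) = strip p l := by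
  induction l with
  | nil => rfl
  | cons a t ih =>
      by_cases h : a ∈ p
      · rw [strip_cons_mem p h t]; exact ih
      · rw [strip_cons_not_mem p h t, strip_cons_not_mem p h t]

lemma head?_strip_not_mem (p : Sym2 (Fin n)) (l : List (Fin n)) :
    ∀ i ∈ (strip p l).head?, ¬ i ∈ p := by
  induction l with
  | nil => simp [strip_nil]
  | cons a t ih =>
      by_cases h : a ∈ p
      · rw [strip_cons_mem p h t]; exact ih
      · rw [strip_cons_not_mem p h t]
        intro i hi
        simp only [List.head?_cons, Option.mem_def, Option.some.injEq] at hi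
        subst hi; exact h

lemma exists_take_strip (p : Sym2 (Fin n)) (l : List (Fin n)) :
    ∃ w, (∀ i ∈ w, i ∈ p) ∧ l = w ++ strip p l := by
  induction l with
  | nil => exact ⟨[], by simp, by simp [strip_nil]⟩
  | cons a t ih =>
      by_cases h : a ∈ p
      · obtain ⟨w, hw, hwt⟩ := ih
        exact ⟨a :: w, by
          intro i hi
          rcases List.mem_cons.1 hi with rfl | hi
          · exact h
          · exact hw i hi, by rw [strip_cons_mem p h t, List.cons_append, ← hwt]⟩
      · exact ⟨[], by simp, by rw [strip_cons_not_mem p h t]; rfl⟩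

lemma chain'_strip (p : Sym2 (Fin n)) {l : List (Fin n)} (hl : l.IsChain (· ≠ ·)) :
    (strip p l).IsChain (· ≠ ·) := by
  induction l with
  | nil => exact hl
  | cons a t ih =>
      by_cases h : a ∈ p
      · rw [strip_cons_mem p h t]; exact ih hl.tail
      · rw [strip_cons_not_mem p h t]; exact hl

lemma gen_mem_pairSub {p : Sym2 (Fin n)} {i : Fin n} (hi : i ∈ p) : gen i ∈ pairSub p := by
  induction p using Sym2.ind with
  | _ a b =>
      rw [pairSub_mk]
      rcases Sym2.mem_iff.1 hi with rfl | rfl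
      · exact Subgroup.subset_closure (Or.inl rfl)
      · exact Subgroup.subset_closure (Or.inr rfl)

lemma wrd_mem_pairSub {p : Sym2 (Fin n)} {w : List (Fin n)} (hw : ∀ i ∈ w, i ∈ p) :
    wrd w ∈ pairSub p := by
  induction w with
  | nil => exact Subgroup.one_mem _
  | cons a t ih =>
      rw [wrd_cons]
      exact Subgroup.mul_mem _ (gen_mem_pairSub (hw a (by simp)))
        (ih fun i hi => hw i (List.mem_cons_of_mem a hi))

/-- Key invariance: the stripped word is unchanged by the action of the pair subgroup. -/
lemma strip_actW {p : Sym2 (Fin n)} {t : Gam n} (ht : t ∈ pairSub p) :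
    ∀ x : RW n, strip p ((actW n t) x).val = strip p x.val := by
  have hP : t ∈ Subgroup.closure {g : Gam n | ∃ i ∈ p, g = gen i} := by
    induction p using Sym2.ind with
    | _ a b =>
        rw [pairSub_mk] at ht
        refine Subgroup.closure_mono ?_ ht
        rintro g (rfl | rfl)
        · exact ⟨a, Sym2.mem_mk_left a b, rfl⟩
        · exact ⟨b, Sym2.mem_mk_right a b, rfl⟩
  clear ht
  induction hP using Subgroup.closure_induction with
  | mem g hg =>
      obtain ⟨i, hip, rfl⟩ := hg
      intro x
      rw [actW_gen_apply]
      by_cases h : x.val.head? = some i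
      · rcases hx : x.val with _ | ⟨a, u⟩
        · rw [hx] at h; simp at h
        · rw [hx] at h
          simp only [List.head?_cons, Option.some.injEq] at h
          subst h
          rw [tog_val_of_head a x (by rw [hx]; rfl), hx]
          simp only [List.tail_cons]
          exact (strip_cons_mem p hip u).symm
      · rw [tog_val_of_ne i x h]
        exact strip_cons_mem p hip x.val
  | one => intro x; simp [map_one]
  | mul a b _ _ iha ihb =>
      intro x
      rw [map_mul, Equiv.Perm.mul_apply, iha, ihb]
  | inv a _ iha =>
      intro x
      have := iha ((actW n a⁻¹) x)
      rw [← Equiv.Perm.mul_apply, ← map_mul, mul_inv_cancel, map_one] at this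
      simpa using this.symm

end Strip

section Strip2

variable {n : ℕ}

lemma rho_coset {p : Sym2 (Fin n)} {g₁ g₂ : Gam n}
    (h : (QuotientGroup.mk g₁ : Gam n ⧸ pairSub p) = QuotientGroup.mk g₂) :
    strip p (rho g₁) = strip p (rho g₂) := by
  rw [QuotientGroup.eq] at h
  have : rho g₂ = ((actW n (g₁⁻¹ * g₂)⁻¹) ⟨rho g₁, rho_chain' g₁⟩).val := by
    unfold rho
    have hgg : g₂⁻¹ = (g₁⁻¹ * g₂)⁻¹ * g₁⁻¹ := by group
    rw [hgg, map_mul, Equiv.Perm.mul_apply]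
  rw [this, strip_actW (Subgroup.inv_mem _ h)]

lemma mk_wrd_strip {p : Sym2 (Fin n)} (g : Gam n) :
    (QuotientGroup.mk g : Gam n ⧸ pairSub p) = QuotientGroup.mk ((wrd (strip p (rho g)))⁻¹) := by
  rw [QuotientGroup.eq]
  obtain ⟨w, hw, hwt⟩ := exists_take_strip p (rho g)
  have : g⁻¹ * (wrd (strip p (rho g)))⁻¹ = wrd w := by
    have h1 : wrd (rho g) = wrd w * wrd (strip p (rho g)) := by rw [← wrd_append, ← hwt]
    rw [wrd_rho] at h1
    rw [h1]
    group
  rw [this]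
  exact wrd_mem_pairSub hw

end Strip2
/-! ### Phase D: the form evolution combinatorics -/

section Forms

variable {n : ℕ}

open scoped Classical

/-- At least two positive coordinates. -/
def TwoPos (α : Fin n → ℕ) : Prop := ∃ x y : Fin n, x ≠ y ∧ α x ≠ 0 ∧ α y ≠ 0

/-- Strict maximum at `a`. -/
def SMax (α : Fin n → ℕ) (a : Fin n) : Prop := ∀ y, y ≠ a → α y < α a

/-- One step of the form evolution. -/
def stepf (α : Fin n → ℕ) (d c : Fin n) : Fin n → ℕ :=
  fun x => if x = c then 0 else if x = d then ∑ y, α y else α x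

/-- The form at the end of the evolution along a word. -/
def ffm : List (Fin n) → (Fin n → ℕ) → (Fin n → ℕ)
  | [], α => α
  | [_], α => α
  | d :: c :: r, α => ffm (c :: r) (stepf α d c)

/-- The Fibonacci vector along a word. -/
def vecf : List (Fin n) → Fin n → ℕ
  | [] => fun _ => 0
  | [k] => fun i => if i = k then 0 else 1
  | k :: c :: r => fun i =>
      if i = k then 0 else
      if i = c then vecf (c :: r) k else vecf (c :: r) i + vecf (c :: r) k

/-- The indicator form of a pair. -/
def chiP (p : Sym2 (Fin n)) : Fin n → ℕ := fun x => if x ∈ p then 1 else 0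

lemma chiP_pos {p : Sym2 (Fin n)} {x : Fin n} (h : x ∈ p) : chiP p x = 1 := by
  simp [chiP, h]

lemma chiP_zero {p : Sym2 (Fin n)} {x : Fin n} (h : ¬ x ∈ p) : chiP p x = 0 := by
  simp [chiP, h]

lemma chiP_twoPos {p : Sym2 (Fin n)} (h : ¬ p.IsDiag) : TwoPos (chiP p) := by
  induction p using Sym2.ind with
  | _ a b =>
      rw [Sym2.mk_isDiag_iff] at h
      exact ⟨a, b, h, by rw [chiP_pos (Sym2.mem_mk_left a b)]; simp,
        by rw [chiP_pos (Sym2.mem_mk_right a b)]; simp⟩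

lemma chiP_inj {p q : Sym2 (Fin n)} (h : chiP p = chiP q) : p = q := by
  have hm : ∀ x : Fin n, x ∈ p ↔ x ∈ q := by
    intro x
    constructor
    · intro hx
      by_contra hq
      have := congrFun h x
      rw [chiP_pos hx, chiP_zero hq] at this
      exact one_ne_zero this
    · intro hx
      by_contra hq
      have := congrFun h x
      rw [chiP_pos hx, chiP_zero hq] at this
      exact one_ne_zero this.symm
  induction p using Sym2.ind with
  | _ a b =>
      induction q using Sym2.ind with
      | _ c d =>
          have ha : a = c ∨ a = d := Sym2.mem_iff.1 ((hm a).1 (Sym2.mem_mk_left a b))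
          have hb : b = c ∨ b = d := Sym2.mem_iff.1 ((hm b).1 (Sym2.mem_mk_right a b))
          have hc : c = a ∨ c = b := Sym2.mem_iff.1 ((hm c).2 (Sym2.mem_mk_left c d))
          have hd : d = a ∨ d = b := Sym2.mem_iff.1 ((hm d).2 (Sym2.mem_mk_right c d))
          rw [Sym2.eq_iff]
          rcases ha with rfl | rfl
          · left
            refine ⟨rfl, ?_⟩
            rcases hb with rfl | rfl
            · rcases hd with rfl | rfl <;> tauto
            · rfl
          · rcases hb with rfl | rfl
            · right; exact ⟨rfl, rfl⟩
            · rcases hc with rfl | rfl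
              · left; exact ⟨rfl, rfl⟩
              · right; exact ⟨rfl, rfl⟩

lemma sum_pos_of_twoPos {α : Fin n → ℕ} (h : TwoPos α) : 0 < ∑ y, α y := by
  obtain ⟨x, _, _, hx, _⟩ := h
  calc 0 < α x := Nat.pos_of_ne_zero hx
    _ ≤ ∑ y, α y := Finset.single_le_sum (fun _ _ => Nat.zero_le _) (Finset.mem_univ x)

lemma lt_sum_of_twoPos {α : Fin n → ℕ} (h : TwoPos α) (y : Fin n) : α y < ∑ z, α z := by
  obtain ⟨x₁, x₂, hx, h1, h2⟩ := h
  have : ∃ z, z ≠ y ∧ α z ≠ 0 := by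
    by_cases hy : x₁ = y
    · exact ⟨x₂, by rw [← hy]; exact fun hh => hx hh.symm, h2⟩
    · exact ⟨x₁, hy, h1⟩
  obtain ⟨z, hzy, hz⟩ := this
  calc α y < α y + α z := by omega
    _ = ∑ w ∈ {y, z}, α w := by rw [Finset.sum_pair (fun hh => hzy hh.symm)]
    _ ≤ ∑ w, α w := Finset.sum_le_sum_of_subset (Finset.subset_univ _)

lemma stepf_smax {α : Fin n → ℕ} {d c : Fin n} (hdc : d ≠ c) (hd : α d = 0)
    (h2 : TwoPos α) : SMax (stepf α d c) d := by
  intro y hy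
  have hdd : stepf α d c d = ∑ z, α z := by simp [stepf, hdc]
  rw [hdd]
  by_cases hyc : y = c
  · subst hyc
    simp only [stepf, if_pos rfl]
    exact sum_pos_of_twoPos h2
  · simp only [stepf, if_neg hyc, if_neg hy]
    exact lt_sum_of_twoPos h2 y

lemma stepf_twoPos {α : Fin n → ℕ} {d c : Fin n} (hdc : d ≠ c) (hd : α d = 0)
    (h2 : TwoPos α) : TwoPos (stepf α d c) := by
  obtain ⟨x₁, x₂, hx, h1', h2'⟩ := h2
  have hz : ∃ z, z ≠ c ∧ z ≠ d ∧ α z ≠ 0 := by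
    have hx₁d : x₁ ≠ d := fun hh => h1' (hh ▸ hd)
    have hx₂d : x₂ ≠ d := fun hh => h2' (hh ▸ hd)
    by_cases hc : x₁ = c
    · exact ⟨x₂, by rw [← hc]; exact fun hh => hx hh.symm, hx₂d, h2'⟩
    · exact ⟨x₁, hc, hx₁d, h1'⟩
  obtain ⟨z, hzc, hzd, hz0⟩ := hz
  refine ⟨d, z, fun hh => hzd hh.symm, ?_, ?_⟩
  · have he : stepf α d c d = ∑ y, α y := by simp [stepf, hdc]
    rw [he]
    exact (sum_pos_of_twoPos ⟨x₁, x₂, hx, h1', h2'⟩).ne'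
  · simp only [stepf, if_neg hzc, if_neg hzd]
    exact hz0

lemma stepf_zero_c {α : Fin n → ℕ} (d c : Fin n) : stepf α d c c = 0 := by
  simp [stepf]

lemma stepf_inj {α₁ α₂ : Fin n → ℕ} {d c : Fin n} (hdc : d ≠ c)
    (h1 : α₁ d = 0) (h2 : α₂ d = 0) (h : stepf α₁ d c = stepf α₂ d c) : α₁ = α₂ := by
  have hoff : ∀ x, x ≠ c → x ≠ d → α₁ x = α₂ x := by
    intro x hxc hxd
    have := congrFun h x
    simpa [stepf, if_neg hxc, if_neg hxd] using this
  have hsum : ∑ y, α₁ y = ∑ y, α₂ y := by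
    have := congrFun h d
    simpa [stepf, if_neg hdc] using this
  funext x
  by_cases hxd : x = d
  · rw [hxd, h1, h2]
  · by_cases hxc : x = c
    · subst hxc
      have hrest : ∑ y ∈ Finset.univ.erase x, α₁ y = ∑ y ∈ Finset.univ.erase x, α₂ y := by
        refine Finset.sum_congr rfl fun y hy => ?_
        have hyx : y ≠ x := (Finset.mem_erase.1 hy).1
        by_cases hyd : y = d
        · rw [hyd, h1, h2]
        · exact hoff y hyx hyd
      have e1 := Finset.add_sum_erase Finset.univ α₁ (Finset.mem_univ x)
      have e2 := Finset.add_sum_erase Finset.univ α₂ (Finset.mem_univ x)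
      rw [← e1, ← e2, hrest] at hsum
      omega
    · exact hoff x hxc hxd

end Forms
section Forms2

variable {n : ℕ}

open scoped Classical

@[simp] lemma ffm_nil (α : Fin n → ℕ) : ffm [] α = α := rfl
@[simp] lemma ffm_single (d : Fin n) (α : Fin n → ℕ) : ffm [d] α = α := rfl
@[simp] lemma ffm_cons_cons (d c : Fin n) (r : List (Fin n)) (α : Fin n → ℕ) :
    ffm (d :: c :: r) α = ffm (c :: r) (stepf α d c) := rfl

lemma ffm_invariant : ∀ (N : ℕ) (l : List (Fin n)), l.length ≤ N → l ≠ [] →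
    l.IsChain (· ≠ ·) → ∀ α : Fin n → ℕ, (∀ h ∈ l.head?, α h = 0) → TwoPos α →
    (∀ b ∈ l.getLast?, ffm l α b = 0) ∧ TwoPos (ffm l α) := by
  intro N
  induction N with
  | zero => intro l hl hne; simp at hl; exact absurd hl hne
  | succ N ih =>
      intro l hlen hne hch α hh h2
      rcases l with _ | ⟨d, t⟩
      · exact absurd rfl hne
      · rcases t with _ | ⟨c, r⟩
        · constructor
          · intro b hb
            simp only [List.getLast?_singleton, Option.mem_def, Option.some.injEq] at hb
            subst hb
            exact hh _ rfl
          · exact h2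
        · have hdc : d ≠ c := (List.isChain_cons_cons.1 hch).1
          have hd0 : α d = 0 := hh d rfl
          have h2' : TwoPos (stepf α d c) := stepf_twoPos hdc hd0 h2
          have hres := ih (c :: r) (by simp at hlen ⊢; omega)
            (by simp) hch.tail (stepf α d c)
            (by intro h hmem
                simp only [List.head?_cons, Option.mem_def, Option.some.injEq] at hmem
                subst hmem
                exact stepf_zero_c d c) h2'
          rw [ffm_cons_cons]
          refine ⟨?_, hres.2⟩
          intro b hb
          rw [List.getLast?_cons_cons] at hb
          exact hres.1 b hb

lemma ffm_snoc : ∀ (l : List (Fin n)) (a b : Fin n) (α : Fin n → ℕ),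
    ffm (l ++ [a, b]) α = stepf (ffm (l ++ [a]) α) a b := by
  intro l
  induction l with
  | nil => intro a b α; simp [ffm]
  | cons x l ih =>
      intro a b α
      rcases l with _ | ⟨y, l'⟩
      · simp [ffm]
      · show ffm (x :: y :: (l' ++ [a, b])) α = _
        rw [ffm_cons_cons]
        have := ih a b (stepf α x y)
        simp only [List.cons_append] at this ⊢
        rw [this]
        rfl

lemma back_decomp (l : List (Fin n)) (h : l ≠ []) :
    ∃ b, l.getLast? = some b ∧ (l = [b] ∨ ∃ l₀ a, l = l₀ ++ [a, b]) := by
  induction l using List.reverseRecOn with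
  | nil => exact absurd rfl h
  | append_singleton l' b _ =>
      refine ⟨b, by simp, ?_⟩
      rcases List.eq_nil_or_concat l' with rfl | ⟨l'', a, rfl⟩
      · left; rfl
      · right
        exact ⟨l'', a, by simp⟩

lemma head?_append_pair (l₀ : List (Fin n)) (a b : Fin n) :
    (l₀ ++ [a]).head? = (l₀ ++ [a, b]).head? := by
  rcases l₀ with _ | ⟨x, t⟩ <;> simp

lemma chain'_append_pair {l₀ : List (Fin n)} {a b : Fin n}
    (h : (l₀ ++ [a, b]).IsChain (· ≠ ·)) :
    (l₀ ++ [a]).IsChain (· ≠ ·) ∧ a ≠ b := by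
  have h' : ((l₀ ++ [a]) ++ [b]).IsChain (· ≠ ·) := by simpa using h
  rw [List.isChain_append] at h'
  refine ⟨h'.1, ?_⟩
  have := h'.2.2 a (by simp) b rfl
  exact this

lemma sum_split_two (f : Fin n → ℕ) {c d : Fin n} (hcd : c ≠ d) :
    ∑ x, f x = f c + f d + ∑ x ∈ (Finset.univ.erase c).erase d, f x := by
  have h1 := Finset.add_sum_erase Finset.univ f (Finset.mem_univ c)
  have h2 := Finset.add_sum_erase (Finset.univ.erase c) f
    (Finset.mem_erase.2 ⟨fun hh => hcd hh.symm, Finset.mem_univ d⟩)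
  omega

lemma sum_ffm : ∀ (N : ℕ) (l : List (Fin n)), l.length ≤ N → l ≠ [] →
    l.IsChain (· ≠ ·) → ∀ α : Fin n → ℕ, (∀ h ∈ l.head?, α h = 0) →
    ∑ x, ffm l α x = ∑ x, α x * vecf l x := by
  intro N
  induction N with
  | zero => intro l hl hne; simp at hl; exact absurd hl hne
  | succ N ih =>
      intro l hlen hne hch α hh
      rcases l with _ | ⟨d, t⟩
      · exact absurd rfl hne
      · rcases t with _ | ⟨c, r⟩
        · simp only [ffm_single]
          refine Finset.sum_congr rfl fun x _ => ?_
          by_cases hx : x = d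
          · subst hx
            rw [hh x rfl]
            simp [vecf]
          · simp [vecf, hx]
        · have hdc : d ≠ c := (List.isChain_cons_cons.1 hch).1
          have hd0 : α d = 0 := hh d rfl
          rw [ffm_cons_cons]
          rw [ih (c :: r) (by simp at hlen ⊢; omega)
            (by simp) hch.tail (stepf α d c)
            (by intro h hmem
                simp only [List.head?_cons, Option.mem_def, Option.some.injEq] at hmem
                subst hmem
                exact stepf_zero_c d c)]
          -- now pure sum manipulation
          set v := vecf (c :: r) with hv
          have hstep_c : stepf α d c c = 0 := stepf_zero_c d c
          have hstep_d : stepf α d c d = ∑ y, α y := by simp [stepf, hdc]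
          have hvec_d : vecf (d :: c :: r) d = 0 := by simp [vecf]
          have hcd' : c ≠ d := Ne.symm hdc
          have hvec_c : vecf (d :: c :: r) c = v d := by
            simp [vecf, hcd', hv]
          have hL := sum_split_two (fun x => stepf α d c x * v x) (hcd := hdc.symm)
          have hR := sum_split_two (fun x => α x * vecf (d :: c :: r) x) (hcd := hdc.symm)
          rw [hL, hR]
          simp only [hstep_c, hstep_d, hvec_c, hvec_d, Nat.zero_mul, Nat.mul_zero]
          have hrest : ∑ x ∈ (Finset.univ.erase c).erase d, α x * vecf (d :: c :: r) x
              = (∑ x ∈ (Finset.univ.erase c).erase d, α x * v x)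
                + (∑ x ∈ (Finset.univ.erase c).erase d, α x) * v d := by
            rw [Finset.sum_mul]
            rw [← Finset.sum_add_distrib]
            refine Finset.sum_congr rfl fun x hx => ?_
            have hxd : x ≠ d := (Finset.mem_erase.1 hx).1
            have hxc : x ≠ c := (Finset.mem_erase.1 (Finset.mem_erase.1 hx).2).1
            have : vecf (d :: c :: r) x = v x + v d := by
              simp [vecf, hxd, hxc, hv]
            rw [this, Nat.mul_add]
          have hrest2 : ∑ x ∈ (Finset.univ.erase c).erase d, stepf α d c x * v x
              = ∑ x ∈ (Finset.univ.erase c).erase d, α x * v x := by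
            refine Finset.sum_congr rfl fun x hx => ?_
            have hxd : x ≠ d := (Finset.mem_erase.1 hx).1
            have hxc : x ≠ c := (Finset.mem_erase.1 (Finset.mem_erase.1 hx).2).1
            simp [stepf, hxd, hxc]
          rw [hrest, hrest2]
          have hsum : ∑ y, α y = α c + ∑ x ∈ (Finset.univ.erase c).erase d, α x := by
            have := sum_split_two α (hcd := hdc.symm)
            omega
          rw [hsum, Nat.add_mul]
          ring

end Forms2
section Forms3

variable {n : ℕ}

open scoped Classical

lemma smax_unique {β : Fin n → ℕ} {a a' : Fin n} (h : SMax β a) (h' : SMax β a') : a = a' := by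
  by_contra hne
  exact absurd (h a' (fun hh => hne hh.symm)) (Nat.lt_asymm (h' a hne))

lemma chiP_not_smax {p : Sym2 (Fin n)} (hp : ¬ p.IsDiag) (a : Fin n) : ¬ SMax (chiP p) a := by
  intro hs
  induction p using Sym2.ind with
  | _ i j =>
      rw [Sym2.mk_isDiag_iff] at hp
      have hi : chiP (s(i, j)) i = 1 := chiP_pos (Sym2.mem_mk_left i j)
      have hj : chiP (s(i, j)) j = 1 := chiP_pos (Sym2.mem_mk_right i j)
      have hle : chiP (s(i, j)) a ≤ 1 := by
        by_cases h : a ∈ s(i, j)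
        · rw [chiP_pos h]
        · rw [chiP_zero h]; omega
      by_cases hia : i = a
      · subst hia
        have := hs j (fun hh => hp hh.symm)
        omega
      · have := hs i (fun hh => hia hh)
        omega

/-- The final form of a long word has a strict max at the second-to-last letter. -/
lemma ffm_last_smax {l₀ : List (Fin n)} {a b : Fin n} {p : Sym2 (Fin n)}
    (hch : (l₀ ++ [a, b]).IsChain (· ≠ ·))
    (hh : ∀ i ∈ (l₀ ++ [a, b]).head?, ¬ i ∈ p) (hp : ¬ p.IsDiag) :
    SMax (ffm (l₀ ++ [a, b]) (chiP p)) a ∧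
    (ffm (l₀ ++ [a]) (chiP p)) a = 0 ∧ TwoPos (ffm (l₀ ++ [a]) (chiP p)) := by
  obtain ⟨hch1, hab⟩ := chain'_append_pair hch
  have hh1 : ∀ i ∈ (l₀ ++ [a]).head?, chiP p i = 0 := by
    intro i hi
    rw [head?_append_pair l₀ a b] at hi
    exact chiP_zero (hh i hi)
  have hinv := ffm_invariant (l₀ ++ [a]).length (l₀ ++ [a]) le_rfl (by simp) hch1
    (chiP p) hh1 (chiP_twoPos hp)
  have hlast : (l₀ ++ [a]).getLast? = some a := by simp
  have ha0 : (ffm (l₀ ++ [a]) (chiP p)) a = 0 := hinv.1 a hlast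
  refine ⟨?_, ha0, hinv.2⟩
  rw [ffm_snoc]
  exact stepf_smax hab ha0 hinv.2

/-- Injectivity of the encoding `(word, pair) ↦ final form`. -/
lemma ffm_inj : ∀ (N : ℕ) (l₁ l₂ : List (Fin n)) (p₁ p₂ : Sym2 (Fin n)),
    l₁.length + l₂.length ≤ N →
    l₁.IsChain (· ≠ ·) → l₂.IsChain (· ≠ ·) → l₁ ≠ [] → l₂ ≠ [] →
    (∀ i ∈ l₁.head?, ¬ i ∈ p₁) → (∀ i ∈ l₂.head?, ¬ i ∈ p₂) →
    ¬ p₁.IsDiag → ¬ p₂.IsDiag →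
    l₁.getLast? = l₂.getLast? →
    ffm l₁ (chiP p₁) = ffm l₂ (chiP p₂) →
    l₁ = l₂ ∧ p₁ = p₂ := by
  intro N
  induction N with
  | zero =>
      intro l₁ l₂ p₁ p₂ hlen _ _ hne₁ _ _ _ _ _ _ _
      rcases l₁ with _ | _
      · exact absurd rfl hne₁
      · simp at hlen
  | succ N ih =>
      intro l₁ l₂ p₁ p₂ hlen hch₁ hch₂ hne₁ hne₂ hh₁ hh₂ hp₁ hp₂ hlast hff
      obtain ⟨b₁, hb₁, hd₁⟩ := back_decomp l₁ hne₁
      obtain ⟨b₂, hb₂, hd₂⟩ := back_decomp l₂ hne₂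
      have hbb : b₁ = b₂ := by
        rw [hb₁, hb₂] at hlast
        exact Option.some.inj hlast
      subst hbb
      rcases hd₁ with rfl | ⟨l₀₁, a₁, rfl⟩
      · rcases hd₂ with rfl | ⟨l₀₂, a₂, rfl⟩
        · simp only [ffm_single] at hff
          exact ⟨rfl, chiP_inj hff⟩
        · exfalso
          have hs := (ffm_last_smax hch₂ hh₂ hp₂).1
          rw [← hff] at hs
          simp only [ffm_single] at hs
          exact chiP_not_smax hp₁ a₂ hs
      · rcases hd₂ with rfl | ⟨l₀₂, a₂, rfl⟩
        · exfalso
          have hs := (ffm_last_smax hch₁ hh₁ hp₁).1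
          rw [hff] at hs
          simp only [ffm_single] at hs
          exact chiP_not_smax hp₂ a₁ hs
        · obtain ⟨hs₁, hz₁, ht₁⟩ := ffm_last_smax hch₁ hh₁ hp₁
          obtain ⟨hs₂, hz₂, ht₂⟩ := ffm_last_smax hch₂ hh₂ hp₂
          have haa : a₁ = a₂ := by
            rw [hff] at hs₁
            exact smax_unique hs₁ hs₂
          subst haa
          have hab : a₁ ≠ b₁ := (chain'_append_pair hch₁).2
          have hffeq : ffm (l₀₁ ++ [a₁]) (chiP p₁) = ffm (l₀₂ ++ [a₁]) (chiP p₂) := by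
            refine stepf_inj hab hz₁ hz₂ ?_
            rw [← ffm_snoc, ← ffm_snoc, hff]
          have hlen' : (l₀₁ ++ [a₁]).length + (l₀₂ ++ [a₁]).length ≤ N := by
            simp only [List.length_append, List.length_cons] at hlen ⊢
            simp at hlen ⊢
            omega
          have hres := ih (l₀₁ ++ [a₁]) (l₀₂ ++ [a₁]) p₁ p₂ hlen'
            (chain'_append_pair hch₁).1 (chain'_append_pair hch₂).1
            (by simp) (by simp)
            (by intro i hi; rw [head?_append_pair l₀₁ a₁ b₁] at hi; exact hh₁ i hi)
            (by intro i hi; rw [head?_append_pair l₀₂ a₁ b₁] at hi; exact hh₂ i hi)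
            hp₁ hp₂ (by simp) hffeq
          refine ⟨?_, hres.2⟩
          have : l₀₁ ++ [a₁] = l₀₂ ++ [a₁] := hres.1
          have hl₀ : l₀₁ = l₀₂ := by
            have := congrArg List.reverse this
            simp at this
            exact this
          rw [hl₀]
end Forms3
/-! ### Phase C: the Fibonacci function computes `vecf` -/

section Bridge

variable {n : ℕ}

open scoped Classical

lemma altGeo_ext {p q : Sym2 (Fin n)} (e : p = q) {nd : ¬ p.IsDiag} {nd' : ¬ q.IsDiag}
    {x : Gam n ⧸ pairSub p} {y : Gam n ⧸ pairSub q} (h : HEq x y) :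
    (⟨p, nd, x⟩ : AltGeo n) = ⟨q, nd', y⟩ := by
  subst e
  rw [heq_iff_eq] at h
  subst h
  rfl

lemma heq_mk_coset {p q : Sym2 (Fin n)} (e : p = q) {g g' : Gam n}
    (hg : g⁻¹ * g' ∈ pairSub p) :
    HEq (QuotientGroup.mk g : Gam n ⧸ pairSub p) (QuotientGroup.mk g' : Gam n ⧸ pairSub q) := by
  subst e
  rw [heq_iff_eq, QuotientGroup.eq]
  exact hg

lemma mkGeo_eq_mkGeo {i k i' k' : Fin n} (h : i ≠ k) (h' : i' ≠ k') {g g' : Gam n}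
    (hp : s(i, k) = s(i', k')) (hg : g⁻¹ * g' ∈ pairSub s(i, k)) :
    mkGeo i k h g = mkGeo i' k' h' g' :=
  altGeo_ext hp (heq_mk_coset hp hg)

lemma mem_pair_iff {i k x : Fin n} : x ∈ (s(i, k) : Sym2 (Fin n)) ↔ x = i ∨ x = k :=
  Sym2.mem_iff

lemma coset_ne_one {p : Sym2 (Fin n)} {l : List (Fin n)} (hch : l.IsChain (· ≠ ·))
    (hne : l ≠ []) (hh : ∀ x ∈ l.head?, ¬ x ∈ p) :
    (QuotientGroup.mk ((wrd l)⁻¹) : Gam n ⧸ pairSub p) ≠ QuotientGroup.mk 1 := by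
  intro hcon
  have h1 : strip p (rho ((wrd l)⁻¹)) = strip p (rho (1 : Gam n)) := rho_coset hcon
  rw [rho_wrd_inv l hch, rho_one, strip_nil, strip_eq_self p hh] at h1
  exact hne h1

lemma min_rep_glen {p : Sym2 (Fin n)} {l : List (Fin n)} (hch : l.IsChain (· ≠ ·))
    (hh : ∀ x ∈ l.head?, ¬ x ∈ p) {h : Gam n}
    (hco : (QuotientGroup.mk h : Gam n ⧸ pairSub p) = QuotientGroup.mk ((wrd l)⁻¹)) :
    glen n ((wrd l)⁻¹) ≤ glen n h := by
  have h1 : strip p (rho h) = strip p (rho ((wrd l)⁻¹)) := rho_coset hco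
  rw [rho_wrd_inv l hch, strip_eq_self p hh] at h1
  rw [glen_eq, glen_eq, rho_wrd_inv l hch, ← h1]
  exact (List.dropWhile_suffix _).length_le

lemma glen_descent {l : List (Fin n)} (hch : l.IsChain (· ≠ ·)) {k : Fin n}
    (hk : l.head? = some k) : glen n ((wrd l)⁻¹ * gen k) < glen n ((wrd l)⁻¹) := by
  have hr : rho ((wrd l)⁻¹) = l := rho_wrd_inv l hch
  have hhead : (rho ((wrd l)⁻¹)).head? = some k := by rw [hr]; exact hk
  rw [glen_eq, glen_eq, rho_mul_gen]
  rw [tog_val_of_head k ⟨rho ((wrd l)⁻¹), rho_chain' _⟩ hhead]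
  show (rho ((wrd l)⁻¹)).tail.length < _
  rw [hr]
  rcases l with _ | ⟨a, t⟩
  · simp at hk
  · simp

/-- Main bridging lemma: `F` of the geodesic `[v;{i,k}]` equals `vecf`. -/
lemma F_eq_vecf {F : AltGeo n → ℕ} (hF : IsFib n F) :
    ∀ (N : ℕ) (l : List (Fin n)), l.length ≤ N → l.IsChain (· ≠ ·) →
    ∀ (k i : Fin n) (hhead : l.head? = some k) (hik : i ≠ k),
    F (mkGeo i k hik ((wrd l)⁻¹)) = vecf l i := by
  intro N
  induction N with
  | zero =>
      intro l hlen hch k i hhead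
      rcases l with _ | _
      · simp at hhead
      · simp at hlen
  | succ N ih =>
      intro l hlen hch k i hhead hik
      rcases l with _ | ⟨k', t⟩
      · simp at hhead
      · simp only [List.head?_cons, Option.some.injEq] at hhead
        subst hhead
        rcases t with _ | ⟨c, r⟩
        · -- singleton: the root lies on the geodesic
          have hco : (mkGeo i k' hik ((wrd [k'])⁻¹)).coset = QuotientGroup.mk 1 := by
            show (QuotientGroup.mk ((wrd [k'])⁻¹) : Gam n ⧸ pairSub s(i, k')) = _
            refine QuotientGroup.eq.2 ?_
            have : ((wrd [k'])⁻¹)⁻¹ * 1 = gen k' := by simp [wrd]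
            rw [this]
            exact gen_mem_pairSub (Sym2.mem_mk_right i k')
          rw [hF.1 _ hco]
          simp [vecf, hik]
        · have hkc : k' ≠ c := (List.isChain_cons_cons.1 hch).1
          by_cases hci : c = i
          · -- the geodesic continues through the parent
            subst hci
            have heq : mkGeo c k' hik ((wrd (k' :: c :: r))⁻¹)
                = mkGeo k' c hkc ((wrd (c :: r))⁻¹) := by
              refine mkGeo_eq_mkGeo hik hkc (Sym2.eq_swap) ?_
              have he : ((wrd (k' :: c :: r))⁻¹)⁻¹ * (wrd (c :: r))⁻¹ = gen k' := by
                rw [inv_inv, wrd_cons, mul_assoc, mul_inv_cancel, mul_one]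
              rw [he]
              exact gen_mem_pairSub (Sym2.mem_mk_right c k')
            rw [heq]
            have hcht : List.IsChain (· ≠ ·) (c :: r) := hch.tail
            have hres := ih (c :: r) (by simp at hlen ⊢; omega)
              hcht c k' (by simp) hkc
            rw [hres]
            have hck : c ≠ k' := Ne.symm hkc
            simp [vecf, hck]
          · -- apply the Fibonacci recursion at the stripped representative
            have hhc : ∀ x ∈ (c :: r).head?, ¬ x ∈ (s(i, k') : Sym2 (Fin n)) := by
              intro x hx
              simp only [List.head?_cons, Option.mem_def, Option.some.injEq] at hx
              subst hx
              rw [mem_pair_iff]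
              push_neg
              exact ⟨hci, fun hh => hkc hh.symm⟩
            set γ := mkGeo i k' hik ((wrd (k' :: c :: r))⁻¹) with hγ
            have hcoset : (QuotientGroup.mk ((wrd (c :: r))⁻¹) : Gam n ⧸ pairSub s(i, k'))
                = γ.coset := by
              show _ = QuotientGroup.mk ((wrd (k' :: c :: r))⁻¹)
              rw [QuotientGroup.eq]
              have he : ((wrd (c :: r))⁻¹)⁻¹ * (wrd (k' :: c :: r))⁻¹ = (gen k')⁻¹ := by
                rw [inv_inv, show wrd (k' :: c :: r) = gen k' * wrd (c :: r) from wrd_cons _ _,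
                  mul_inv_rev, ← mul_assoc, mul_inv_cancel, one_mul]
              rw [he, gen_inv]
              exact gen_mem_pairSub (Sym2.mem_mk_right i k')
            have hne1 : γ.coset ≠ QuotientGroup.mk 1 := by
              show (QuotientGroup.mk ((wrd (k' :: c :: r))⁻¹) : Gam n ⧸ pairSub s(i, k')) ≠ _
              intro hcon
              have h1 := rho_coset hcon
              rw [rho_wrd_inv _ hch, rho_one, strip_nil,
                strip_cons_mem _ (Sym2.mem_mk_right i k') (c :: r),
                strip_eq_self _ hhc] at h1
              exact List.cons_ne_nil c r h1
            have hcht : List.IsChain (· ≠ ·) (c :: r) := hch.tail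
            have hmin : ∀ h : Gam n, QuotientGroup.mk h = γ.coset →
                glen n ((wrd (c :: r))⁻¹) ≤ glen n h := by
              intro h hco
              exact min_rep_glen hcht hhc (hco.trans hcoset.symm)
            have hic : i ≠ c := Ne.symm hci
            have hrec := hF.2 γ hne1 ((wrd (c :: r))⁻¹) hcoset hmin i k' c rfl
              hci (Ne.symm hkc) (glen_descent hcht (by simp))
            rw [hrec]
            have h1 := ih (c :: r) (by simp at hlen ⊢; omega)
              hcht c i (by simp) hic
            have h2 := ih (c :: r) (by simp at hlen ⊢; omega)
              hcht c k' (by simp) hkc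
            rw [h1, h2]
            simp [vecf, hik, hic]

/-- The value of `F` on a geodesic given by a stripped word. -/
lemma F_value {F : AltGeo n → ℕ} (hF : IsFib n F) {l : List (Fin n)}
    (hch : l.IsChain (· ≠ ·)) (hne : l ≠ [])
    {i j : Fin n} (hij : i ≠ j) (nd : ¬ (s(i, j) : Sym2 (Fin n)).IsDiag)
    (hh : ∀ x ∈ l.head?, ¬ x ∈ (s(i, j) : Sym2 (Fin n))) :
    F ⟨s(i, j), nd, QuotientGroup.mk ((wrd l)⁻¹)⟩ = vecf l i + vecf l j := by
  rcases l with _ | ⟨k, t⟩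
  · exact absurd rfl hne
  · have hki : k ≠ i := by
      intro hh'
      exact hh k rfl (by rw [mem_pair_iff]; left; exact hh')
    have hkj : k ≠ j := by
      intro hh'
      exact hh k rfl (by rw [mem_pair_iff]; right; exact hh')
    set γ : AltGeo n := ⟨s(i, j), nd, QuotientGroup.mk ((wrd (k :: t))⁻¹)⟩ with hγ
    have hne1 : γ.coset ≠ QuotientGroup.mk 1 := coset_ne_one hch (by simp) hh
    have hmin : ∀ h : Gam n, QuotientGroup.mk h = γ.coset →
        glen n ((wrd (k :: t))⁻¹) ≤ glen n h := fun h hco => min_rep_glen hch hh hco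
    have hrec := hF.2 γ hne1 ((wrd (k :: t))⁻¹) rfl hmin i j k rfl hki hkj
      (glen_descent hch (by simp))
    rw [hrec]
    rw [F_eq_vecf hF (k :: t).length (k :: t) le_rfl hch k i (by simp) (Ne.symm hki),
      F_eq_vecf hF (k :: t).length (k :: t) le_rfl hch k j (by simp) (Ne.symm hkj)]

end Bridge
/-! ### Phase E1: counting tools -/

section Count1

open scoped Classical

/-- Partial sums of a tuple. -/
def SnL {r : ℕ} (β : Fin r → ℕ) (t : ℕ) : ℕ :=
  ∑ s ∈ Finset.univ.filter (fun s : Fin r => (s : ℕ) < t), β s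

lemma SnL_zero {r : ℕ} (β : Fin r → ℕ) : SnL β 0 = 0 := by simp [SnL]

lemma SnL_succ {r : ℕ} (β : Fin r → ℕ) (t : ℕ) (ht : t < r) :
    SnL β (t + 1) = SnL β t + β ⟨t, ht⟩ := by
  unfold SnL
  have he : Finset.univ.filter (fun s : Fin r => (s : ℕ) < t + 1)
      = insert ⟨t, ht⟩ (Finset.univ.filter (fun s : Fin r => (s : ℕ) < t)) := by
    ext s
    simp only [Finset.mem_filter, Finset.mem_univ, true_and, Finset.mem_insert, Fin.ext_iff]
    omega
  rw [he, Finset.sum_insert (by simp)]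
  omega

lemma SnL_total {r : ℕ} (β : Fin r → ℕ) (t : ℕ) (ht : r ≤ t) : SnL β t = ∑ s, β s := by
  unfold SnL
  rw [Finset.filter_true_of_mem (fun s _ => lt_of_lt_of_le s.isLt ht)]

lemma SnL_mono {r : ℕ} (β : Fin r → ℕ) {t t' : ℕ} (h : t ≤ t') : SnL β t ≤ SnL β t' := by
  refine Finset.sum_le_sum_of_subset ?_
  intro s hs
  simp only [Finset.mem_filter, Finset.mem_univ, true_and] at hs ⊢
  omega

lemma SnL_le_total {r : ℕ} (β : Fin r → ℕ) (t : ℕ) : SnL β t ≤ ∑ s, β s := by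
  exact Finset.sum_le_sum_of_subset (Finset.filter_subset _ _)

lemma SnL_eq_of_digits {r m : ℕ} (hm : 0 < m) {β₁ β₂ : Fin r → ℕ}
    (hs₁ : ∑ s, β₁ s = m) (hs₂ : ∑ s, β₂ s = m)
    (tp₁ : TwoPos β₁) (tp₂ : TwoPos β₂)
    (hd : ∀ t : ℕ, t + 1 < r → SnL β₁ (t + 1) % m = SnL β₂ (t + 1) % m) :
    ∀ u : ℕ, SnL β₁ u = SnL β₂ u := by
  intro u
  induction u using Nat.strong_induction_on with
  | _ u ih =>
      rcases u with _ | t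
      · rw [SnL_zero, SnL_zero]
      · by_cases hu : r ≤ t + 1
        · rw [SnL_total _ _ hu, SnL_total _ _ hu, hs₁, hs₂]
        · push_neg at hu
          have hdig := hd t hu
          have hle₁ : SnL β₁ (t + 1) ≤ m := hs₁ ▸ SnL_le_total β₁ (t + 1)
          have hle₂ : SnL β₂ (t + 1) ≤ m := hs₂ ▸ SnL_le_total β₂ (t + 1)
          have htr : t < r := by omega
          by_cases c₁ : SnL β₁ (t + 1) < m
          · by_cases c₂ : SnL β₂ (t + 1) < m
            · rwa [Nat.mod_eq_of_lt c₁, Nat.mod_eq_of_lt c₂] at hdig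
            · -- SnL β₂ (t+1) = m, SnL β₁ (t+1) < m hence = 0
              have he₂ : SnL β₂ (t + 1) = m := by omega
              rw [he₂, Nat.mod_self, Nat.mod_eq_of_lt c₁] at hdig
              exfalso
              have hz : SnL β₁ (t + 1) = 0 := hdig
              have hz' : SnL β₂ t = 0 := by
                have := ih t (by omega)
                have hmono := SnL_mono β₁ (show t ≤ t + 1 by omega)
                omega
              have hjump : β₂ ⟨t, htr⟩ = m := by
                have := SnL_succ β₂ t htr
                have hm1 : SnL β₁ t = SnL β₂ t := ih t (by omega)
                omega
              have := lt_sum_of_twoPos tp₂ ⟨t, htr⟩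
              omega
          · -- SnL β₁ (t+1) = m
            have he₁ : SnL β₁ (t + 1) = m := by omega
            by_cases c₂ : SnL β₂ (t + 1) < m
            · rw [he₁, Nat.mod_self, Nat.mod_eq_of_lt c₂] at hdig
              exfalso
              have hz : SnL β₂ (t + 1) = 0 := hdig.symm
              have hz' : SnL β₁ t = 0 := by
                have := ih t (by omega)
                have hmono := SnL_mono β₂ (show t ≤ t + 1 by omega)
                omega
              have hjump : β₁ ⟨t, htr⟩ = m := by
                have := SnL_succ β₁ t htr
                omega
              have := lt_sum_of_twoPos tp₁ ⟨t, htr⟩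
              omega
            · omega

lemma beta_eq_of_SnL {r : ℕ} {β₁ β₂ : Fin r → ℕ}
    (h : ∀ u : ℕ, SnL β₁ u = SnL β₂ u) : β₁ = β₂ := by
  funext s
  have h1 := SnL_succ β₁ s.val s.isLt
  have h2 := SnL_succ β₂ s.val s.isLt
  have he : (⟨s.val, s.isLt⟩ : Fin r) = s := rfl
  rw [he] at h1 h2
  have ha := h s.val
  have hb := h (s.val + 1)
  omega

/-- Enumeration of `Fin n` minus a point. -/
def embAt {n : ℕ} (e : Fin n) (t : Fin (n - 1)) : Fin n :=
  if h : t.val < e.val then ⟨t.val, by have := e.isLt; omega⟩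
  else ⟨t.val + 1, by have := t.isLt; omega⟩

lemma embAt_injective {n : ℕ} (e : Fin n) : Function.Injective (embAt e) := by
  intro t₁ t₂ h
  unfold embAt at h
  apply Fin.ext
  by_cases h₁ : t₁.val < e.val <;> by_cases h₂ : t₂.val < e.val <;>
    simp only [h₁, h₂, dif_pos, dif_neg, not_false_iff, Fin.mk.injEq] at h <;>
    first
      | exact h
      | omega

lemma embAt_ne {n : ℕ} (e : Fin n) (t : Fin (n - 1)) : embAt e t ≠ e := by
  unfold embAt
  by_cases h : t.val < e.val <;>
    simp only [h, dif_pos, dif_neg, not_false_iff, Ne, Fin.ext_iff] <;> omega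

lemma embAt_surj {n : ℕ} (e : Fin n) {x : Fin n} (hx : x ≠ e) :
    ∃ t : Fin (n - 1), embAt e t = x := by
  have hxe : x.val ≠ e.val := fun h => hx (Fin.ext h)
  by_cases h : x.val < e.val
  · refine ⟨⟨x.val, by have := e.isLt; omega⟩, ?_⟩
    unfold embAt
    rw [dif_pos h]
  · refine ⟨⟨x.val - 1, by have := x.isLt; omega⟩, ?_⟩
    unfold embAt
    rw [dif_neg (by simp only; omega)]
    apply Fin.ext
    simp only
    omega

lemma image_embAt {n : ℕ} (e : Fin n) :
    Finset.univ.image (embAt e) = Finset.univ.erase e := by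
  ext x
  simp only [Finset.mem_image, Finset.mem_univ, true_and, Finset.mem_erase, and_true]
  constructor
  · rintro ⟨t, rfl⟩
    exact embAt_ne e t
  · intro hx
    exact embAt_surj e hx

lemma sum_embAt {n : ℕ} (e : Fin n) (f : Fin n → ℕ) :
    ∑ t : Fin (n - 1), f (embAt e t) = ∑ x ∈ Finset.univ.erase e, f x := by
  rw [← image_embAt e, Finset.sum_image (fun a _ b _ h => embAt_injective e h)]

lemma sum_chi_vec {n : ℕ} {i j : Fin n} (hij : i ≠ j) (v : Fin n → ℕ) :
    ∑ x, chiP (s(i, j) : Sym2 (Fin n)) x * v x = v i + v j := by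
  rw [sum_split_two (fun x => chiP (s(i, j) : Sym2 (Fin n)) x * v x) (hcd := hij)]
  rw [chiP_pos (Sym2.mem_mk_left i j), chiP_pos (Sym2.mem_mk_right i j)]
  have hz : ∑ x ∈ (Finset.univ.erase i).erase j,
      chiP (s(i, j) : Sym2 (Fin n)) x * v x = 0 := by
    refine Finset.sum_eq_zero fun x hx => ?_
    have hxj : x ≠ j := (Finset.mem_erase.1 hx).1
    have hxi : x ≠ i := (Finset.mem_erase.1 (Finset.mem_erase.1 hx).2).1
    rw [chiP_zero (by rw [mem_pair_iff]; push_neg; exact ⟨hxi, hxj⟩)]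
    omega
  rw [hz]
  omega

end Count1
/-! ### Phase E2: assembly -/

section Assemble

variable {n : ℕ}

open scoped Classical

/-- The canonical stripped word of an alternating geodesic. -/
noncomputable def Lw (γ : AltGeo n) : List (Fin n) :=
  strip γ.pair (rho (Quotient.out γ.coset))

lemma Lw_chain' (γ : AltGeo n) : (Lw γ).IsChain (· ≠ ·) :=
  chain'_strip _ (rho_chain' _)

lemma Lw_head (γ : AltGeo n) : ∀ x ∈ (Lw γ).head?, ¬ x ∈ γ.pair :=
  head?_strip_not_mem _ _

lemma Lw_coset (γ : AltGeo n) :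
    (QuotientGroup.mk ((wrd (Lw γ))⁻¹) : Gam n ⧸ pairSub γ.pair) = γ.coset := by
  have h1 := mk_wrd_strip (p := γ.pair) (Quotient.out γ.coset)
  have h2 : (QuotientGroup.mk (Quotient.out γ.coset) : Gam n ⧸ pairSub γ.pair) = γ.coset :=
    QuotientGroup.out_eq' γ.coset
  exact h1.symm.trans h2

lemma altGeo_eq_of_Lw {γ₁ γ₂ : AltGeo n} (hp : γ₁.pair = γ₂.pair) (hl : Lw γ₁ = Lw γ₂) :
    γ₁ = γ₂ := by
  obtain ⟨p₁, nd₁, c₁⟩ := γ₁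
  obtain ⟨p₂, nd₂, c₂⟩ := γ₂
  simp only at hp
  subst hp
  have h₁ := Lw_coset ⟨p₁, nd₁, c₁⟩
  have h₂ := Lw_coset ⟨p₁, nd₂, c₂⟩
  rw [hl] at h₁
  have hc : c₂ = c₁ := h₂.symm.trans h₁
  subst hc
  rfl

lemma Lw_ne_nil {F : AltGeo n → ℕ} (hF : IsFib n F) {m : ℕ} (hm : 2 ≤ m)
    {γ : AltGeo n} (hγ : F γ = m) : Lw γ ≠ [] := by
  intro hnil
  have hco : γ.coset = QuotientGroup.mk 1 := by
    rw [← Lw_coset γ, hnil]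
    norm_num
  have := hF.1 γ hco
  omega

lemma F_eq_sum_ffm {F : AltGeo n → ℕ} (hF : IsFib n F)
    (γ : AltGeo n) (hne : Lw γ ≠ []) :
    F γ = ∑ x, ffm (Lw γ) (chiP γ.pair) x := by
  obtain ⟨p, nd, c⟩ := γ
  obtain ⟨i, j, rfl⟩ : ∃ i j, p = s(i, j) := Sym2.ind (fun i j => ⟨i, j, rfl⟩) p
  have hij : i ≠ j := fun h => nd (by rw [Sym2.mk_isDiag_iff]; exact h)
  set γ' : AltGeo n := ⟨s(i, j), nd, c⟩ with hγ'
  set l := Lw γ' with hldef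
  have hch : l.IsChain (· ≠ ·) := Lw_chain' γ'
  have hh : ∀ x ∈ l.head?, ¬ x ∈ (s(i, j) : Sym2 (Fin n)) := Lw_head γ'
  have hco : (QuotientGroup.mk ((wrd l)⁻¹) : Gam n ⧸ pairSub s(i, j)) = c := Lw_coset γ'
  have hγeq : γ' = ⟨s(i, j), nd, QuotientGroup.mk ((wrd l)⁻¹)⟩ := by
    rw [hγ']
    exact congrArg (fun x => (⟨s(i, j), nd, x⟩ : AltGeo n)) hco.symm
  calc F γ' = F ⟨s(i, j), nd, QuotientGroup.mk ((wrd l)⁻¹)⟩ := by rw [← hγeq]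
    _ = vecf l i + vecf l j := F_value hF hch hne hij nd hh
    _ = ∑ x, chiP (s(i, j) : Sym2 (Fin n)) x * vecf l x := (sum_chi_vec hij _).symm
    _ = ∑ x, ffm l (chiP (s(i, j) : Sym2 (Fin n))) x := by
        rw [sum_ffm l.length l le_rfl hne hch _
          (fun x hx => chiP_zero (hh x hx))]

end Assemble
/-- For `m ≥ 2`, the Fibonacci function takes the value `m` at most `n·m^{n−2}` times. -/
theorem fibonacci_multiplicity (n : ℕ) (hn : 3 ≤ n) (F : AltGeo n → ℕ) (hF : IsFib n F)
    (m : ℕ) (hm : 2 ≤ m) :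
    {γ : AltGeo n | F γ = m}.Finite ∧
    {γ : AltGeo n | F γ = m}.ncard ≤ n * m ^ (n - 2) := by
  classical
  have m0 : 0 < m := by omega
  set S := {γ : AltGeo n | F γ = m} with hS
  let i0 : Fin n := ⟨0, by omega⟩
  -- data associated to each geodesic in the level set
  have hne : ∀ γ : ↥S, Lw γ.1 ≠ [] := fun γ => Lw_ne_nil hF hm γ.2
  let al : ↥S → Fin n → ℕ := fun γ => ffm (Lw γ.1) (chiP γ.1.pair)
  let ep : ↥S → Fin n := fun γ => (Lw γ.1).getLast?.getD i0
  have hlast : ∀ γ : ↥S, (Lw γ.1).getLast? = some (ep γ) := by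
    intro γ
    obtain ⟨b, hb, -⟩ := back_decomp _ (hne γ)
    rw [hb]
    show _ = some ((Lw γ.1).getLast?.getD i0)
    rw [hb]
    rfl
  have hinv : ∀ γ : ↥S, al γ (ep γ) = 0 ∧ TwoPos (al γ) := by
    intro γ
    have h := ffm_invariant (Lw γ.1).length (Lw γ.1) le_rfl (hne γ) (Lw_chain' γ.1)
      (chiP γ.1.pair) (fun x hx => chiP_zero (Lw_head γ.1 x hx)) (chiP_twoPos γ.1.nd)
    exact ⟨h.1 (ep γ) (hlast γ), h.2⟩
  have hsum : ∀ γ : ↥S, ∑ x, al γ x = m := by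
    intro γ
    show ∑ x, ffm (Lw γ.1) (chiP γ.1.pair) x = m
    have := F_eq_sum_ffm hF γ.1 (hne γ)
    have hγ := γ.2
    simp only [hS, Set.mem_setOf_eq] at hγ
    omega
  let be : ↥S → Fin (n - 1) → ℕ := fun γ t => al γ (embAt (ep γ) t)
  have hbsum : ∀ γ : ↥S, ∑ t, be γ t = m := by
    intro γ
    show ∑ t : Fin (n - 1), al γ (embAt (ep γ) t) = m
    rw [sum_embAt]
    have h1 := Finset.add_sum_erase Finset.univ (al γ) (Finset.mem_univ (ep γ))
    have h2 := (hinv γ).1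
    have h3 := hsum γ
    omega
  have hbTP : ∀ γ : ↥S, TwoPos (be γ) := by
    intro γ
    obtain ⟨x, y, hxy, hx, hy⟩ := (hinv γ).2
    have hxe : x ≠ ep γ := fun h => hx (h ▸ (hinv γ).1)
    have hye : y ≠ ep γ := fun h => hy (h ▸ (hinv γ).1)
    obtain ⟨tx, htx⟩ := embAt_surj (ep γ) hxe
    obtain ⟨ty, hty⟩ := embAt_surj (ep γ) hye
    refine ⟨tx, ty, ?_, ?_, ?_⟩
    · intro h
      exact hxy (by rw [← htx, ← hty, h])
    · show al γ (embAt (ep γ) tx) ≠ 0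
      rw [htx]; exact hx
    · show al γ (embAt (ep γ) ty) ≠ 0
      rw [hty]; exact hy
  -- the encoding
  let Enc : ↥S → Fin n × (Fin (n - 2) → Fin m) := fun γ =>
    (ep γ, fun t => ⟨SnL (be γ) (t.val + 1) % m, Nat.mod_lt _ m0⟩)
  have hinj : Function.Injective Enc := by
    intro γ₁ γ₂ hEnc
    have he : ep γ₁ = ep γ₂ := congrArg Prod.fst hEnc
    have hdig := congrArg Prod.snd hEnc
    have hd : ∀ t : ℕ, t + 1 < n - 1 →
        SnL (be γ₁) (t + 1) % m = SnL (be γ₂) (t + 1) % m := by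
      intro t ht
      have := congrFun hdig ⟨t, by omega⟩
      exact congrArg Fin.val this
    have hSnL := SnL_eq_of_digits m0 (hbsum γ₁) (hbsum γ₂) (hbTP γ₁) (hbTP γ₂) hd
    have hbeq : be γ₁ = be γ₂ := beta_eq_of_SnL hSnL
    have haeq : al γ₁ = al γ₂ := by
      funext x
      by_cases hx : x = ep γ₁
      · rw [hx, (hinv γ₁).1, he, (hinv γ₂).1]
      · obtain ⟨t, ht⟩ := embAt_surj (ep γ₁) hx
        have h1 : al γ₁ x = be γ₁ t := by
          show _ = al γ₁ (embAt (ep γ₁) t)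
          rw [ht]
        have h2 : al γ₂ x = be γ₂ t := by
          show _ = al γ₂ (embAt (ep γ₂) t)
          rw [← he, ht]
        rw [h1, h2, hbeq]
    have hlasteq : (Lw γ₁.1).getLast? = (Lw γ₂.1).getLast? := by
      rw [hlast γ₁, hlast γ₂, he]
    have hkey := ffm_inj ((Lw γ₁.1).length + (Lw γ₂.1).length) (Lw γ₁.1) (Lw γ₂.1)
      γ₁.1.pair γ₂.1.pair le_rfl (Lw_chain' γ₁.1) (Lw_chain' γ₂.1) (hne γ₁) (hne γ₂)
      (Lw_head γ₁.1) (Lw_head γ₂.1) γ₁.1.nd γ₂.1.nd hlasteq haeq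
    exact Subtype.ext (altGeo_eq_of_Lw hkey.2 hkey.1)
  haveI hfin : Finite ↥S := Finite.of_injective Enc hinj
  constructor
  · exact Set.toFinite S
  · have h1 : S.ncard = Nat.card ↥S := (Nat.card_coe_set_eq S).symm
    rw [h1]
    calc Nat.card ↥S ≤ Nat.card (Fin n × (Fin (n - 2) → Fin m)) :=
          Nat.card_le_card_of_injective Enc hinj
      _ = n * m ^ (n - 2) := by
          simp [Nat.card_eq_fintype_card]

end MarkoffHurwitz
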